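/- For every incidence graph I ∈ IEHW_k there exist an entangled hypertree decomposition D = (T, Bag, Cover) of I and a tree-node ω ∈ V(T) with |Cover(ω)| ≤ k such that the tree T rooted at ω is binary (every node has at most two children) and monotone (for every parent-child pair (t_p, t_c) in the rooted tree, |Cover(t_p)| ≥ |Cover(t_c)|). -/

import Mathlib

set_option autoImplicit false

noncomputable section

/-! ### Incidence graphs -/

/-- An incidence graph: finite sets of red nodes and blue nodes (realised as two
disjoint finite types), edges from blue nodes to red nodes, every red node adjacent
to at least one blue node. -/
structure IncGraph where
  R : Type
  B : Type
  [finR : Finite R]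
  [finB : Finite B]
  E : B → R → Prop
  covered : ∀ v : R, ∃ e : B, E e v

attribute [instance] IncGraph.finR IncGraph.finB

/-- The neighbourhood of a blue node. -/
def IncGraph.nbhd (I : IncGraph) (e : I.B) : Set I.R := {v | I.E e v}

/-- Homomorphisms between incidence graphs. -/
def IncHom (J I : IncGraph) : Type :=
  {h : (J.R → I.R) × (J.B → I.B) // ∀ e v, J.E e v → I.E (h.2 e) (h.1 v)}

/-- The number of homomorphisms between incidence graphs. -/
def homCount (J I : IncGraph) : ℕ := Nat.card (IncHom J I)

/-- Homomorphism indistinguishability over a class of incidence graphs. -/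
def HomIndist (C : Set IncGraph) (I I' : IncGraph) : Prop :=
  ∀ J ∈ C, homCount J I = homCount J I'

/-- Isomorphism of incidence graphs. -/
def IncIso (I I' : IncGraph) : Prop :=
  ∃ (πR : I.R ≃ I'.R) (πB : I.B ≃ I'.B), ∀ e v, I.E e v ↔ I'.E (πB e) (πR v)

/-! ### Hypergraphs -/

structure HypGraph where
  V : Type
  Edge : Type
  [finV : Finite V]
  [finE : Finite Edge]
  f : Edge → Set V
  covered : ∀ v : V, ∃ e : Edge, v ∈ f e

attribute [instance] HypGraph.finV HypGraph.finE

/-- A hypergraph is simple if its incidence function is injective. -/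
def HypGraph.Simple (H : HypGraph) : Prop := Function.Injective H.f

/-- The incidence graph of a hypergraph. -/
def HypGraph.inc (H : HypGraph) : IncGraph where
  R := H.V
  B := H.Edge
  E := fun e v => v ∈ H.f e
  covered := H.covered

/-- Homomorphisms between hypergraphs. -/
def HypHom (F H : HypGraph) : Type :=
  {h : (F.V → H.V) × (F.Edge → H.Edge) // ∀ e, H.f (h.2 e) = h.1 '' F.f e}

/-- The number of homomorphisms between hypergraphs. -/
def hhomCount (F H : HypGraph) : ℕ := Nat.card (HypHom F H)

/-- Homomorphism indistinguishability over a class of hypergraphs. -/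
def HypHomIndist (C : Set HypGraph) (H H' : HypGraph) : Prop :=
  ∀ F ∈ C, hhomCount F H = hhomCount F H'

/-! ### Hypertree decompositions -/

/-- A complete generalised hypertree decomposition of an incidence graph. -/
structure GHD (I : IncGraph) where
  T : Type
  [finT : Finite T]
  tr : SimpleGraph T
  isTree : tr.IsTree
  Bag : T → Set I.R
  Cover : T → Set I.B
  complete : ∀ e : I.B, ∃ t, I.nbhd e ⊆ Bag t ∧ e ∈ Cover t
  connR : ∀ v : I.R, (tr.induce {t | v ∈ Bag t}).Connected
  covering : ∀ t, Bag t ⊆ ⋃ e ∈ Cover t, I.nbhd e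

attribute [instance] GHD.finT

/-- The decomposition has width at most `k`. -/
def GHD.widthLe {I : IncGraph} (D : GHD I) (k : ℕ) : Prop :=
  ∀ t, (D.Cover t).ncard ≤ k

/-- An entangled hypertree decomposition. -/
structure EHD (I : IncGraph) extends GHD I where
  precise : ∀ t, (⋃ e ∈ Cover t, I.nbhd e) = Bag t
  connB : ∀ e : I.B, (tr.induce {t | e ∈ Cover t}).Connected

/-- Incidence graphs of generalised hypertree width at most `k`. -/
def IGHW (k : ℕ) : Set IncGraph := {I | ∃ D : GHD I, D.widthLe k}

/-- Incidence graphs of entangled hypertree width at most `k`. -/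
def IEHW (k : ℕ) : Set IncGraph := {I | ∃ D : EHD I, D.toGHD.widthLe k}

/-- Hypergraphs of generalised hypertree width at most `k`. -/
def GHWclass (k : ℕ) : Set HypGraph := {H | H.inc ∈ IGHW k}

/-- Simple hypergraphs of generalised hypertree width at most `k`. -/
def SGHWclass (k : ℕ) : Set HypGraph := {H | H.Simple ∧ H.inc ∈ IGHW k}

/-- Adding `n` fresh blue nodes whose neighbourhood is exactly `s`. -/
def IncGraph.addBlue (J : IncGraph) (s : Set J.R) (n : ℕ) : IncGraph where
  R := J.R
  B := J.B ⊕ Fin n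
  E := fun e v => Sum.elim (fun e₁ => J.E e₁ v) (fun _ => v ∈ s) e
  covered := fun v => by
    obtain ⟨e, he⟩ := J.covered v
    exact ⟨Sum.inl e, he⟩

/-! ### Guard functions -/

/-- A guard function: a partial map from red-variable indices to `[k]`
with finite domain. -/
structure GuardF (k : ℕ) where
  f : ℕ → Option (Fin k)
  fin : {i | (f i).isSome}.Finite

namespace GuardF

variable {k : ℕ}

/-- The domain of a guard function. -/
def dom (g : GuardF k) : Finset ℕ := g.fin.toFinset

open Classical in
/-- The image of a guard function. -/
def img (g : GuardF k) : Finset (Fin k) :=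
  Finset.univ.filter fun j => ∃ i, g.f i = some j

theorem mem_dom {g : GuardF k} {i : ℕ} : i ∈ g.dom ↔ (g.f i).isSome := by
  simp [dom, Set.Finite.mem_toFinset]

theorem mem_img {g : GuardF k} {j : Fin k} : j ∈ g.img ↔ ∃ i, g.f i = some j := by
  classical
  simp [img]

/-- Union of two guard functions (the first takes precedence). -/
def union (g₁ g₂ : GuardF k) : GuardF k where
  f := fun i => (g₁.f i).or (g₂.f i)
  fin := by
    apply (g₁.fin.union g₂.fin).subset
    intro i hi
    simp only [Set.mem_setOf_eq, Option.isSome_or, Bool.or_eq_true] at hi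
    exact hi

/-- Removing a set of indices from the domain of a guard function. -/
def remove (g : GuardF k) (s : Finset ℕ) : GuardF k where
  f := fun i => if i ∈ s then none else g.f i
  fin := by
    apply g.fin.subset
    intro i hi
    simp only [Set.mem_setOf_eq] at hi ⊢
    by_cases h : i ∈ s
    · simp [h] at hi
    · simpa [h] using hi

/-- Two guard functions are compatible if they agree on the intersection
of their domains. -/
def Compatible (g₁ g₂ : GuardF k) : Prop :=
  ∀ i j₁ j₂, g₁.f i = some j₁ → g₂.f i = some j₂ → j₁ = j₂

/-- `f` is a transition for `g`. -/
def IsTransition (g f : GuardF k) : Prop :=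
  f.dom.Nonempty ∧ (∀ i, (f.f i).isSome → (g.f i).isSome) ∧
    ∀ i j, g.f i = some j → j ∈ f.img → (f.f i).isSome

/-- `g ⊆ g'` for guard functions. -/
def le (g g' : GuardF k) : Prop := ∀ i j, g.f i = some j → g'.f i = some j

end GuardF

/-! ### The logic GC^k -/

/-- Raw syntax of the two-sorted counting logic with guards. Quantifiers carry
the guard function used to guard the quantified formula. -/
inductive Fml (k : ℕ) : Type where
  | top : Fml k
  | E (j : Fin k) (i : ℕ) : Fml k
  | beq (j j' : Fin k) : Fml k
  | req (i i' : ℕ) : Fml k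
  | not (ψ : Fml k) : Fml k
  | and (ψ₁ ψ₂ : Fml k) : Fml k
  | exR (n : ℕ) (s : Finset ℕ) (g : GuardF k) (ψ : Fml k) : Fml k
  | exB (n : ℕ) (s : Finset (Fin k)) (g : GuardF k) (ψ : Fml k) : Fml k

/-- Indices of free red variables of a formula.  For the quantified formulas the
quantified body is `(α_g ∧ ψ)`. -/
def freeR {k : ℕ} : Fml k → Finset ℕ
  | .top => ∅
  | .E _ i => {i}
  | .beq _ _ => ∅
  | .req i i' => {i, i'}
  | .not ψ => freeR ψ
  | .and ψ₁ ψ₂ => freeR ψ₁ ∪ freeR ψ₂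
  | .exR _ s g ψ => (g.dom ∪ freeR ψ) \ s
  | .exB _ _ g ψ => g.dom ∪ freeR ψ

/-- Indices of free blue variables of a formula. -/
def freeB {k : ℕ} : Fml k → Finset (Fin k)
  | .top => ∅
  | .E j _ => {j}
  | .beq j j' => {j, j'}
  | .req _ _ => ∅
  | .not ψ => freeB ψ
  | .and ψ₁ ψ₂ => freeB ψ₁ ∪ freeB ψ₂
  | .exR _ _ g ψ => g.img ∪ freeB ψ
  | .exB _ s g ψ => (g.img ∪ freeB ψ) \ s

/-- Updating a red assignment on the variables in `s`. -/
def updR {R : Type} (βR : ℕ → R) (s : Finset ℕ) (a : ↥s → R) : ℕ → R :=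
  fun i => if h : i ∈ s then a ⟨i, h⟩ else βR i

/-- Updating a blue assignment on the variables in `s`. -/
def updB {k : ℕ} {B : Type} (βB : Fin k → B) (s : Finset (Fin k)) (a : ↥s → B) : Fin k → B :=
  fun j => if h : j ∈ s then a ⟨j, h⟩ else βB j

/-- Satisfaction of the guard formula `α_g` in an interpretation. -/
def GuardSat {k : ℕ} (I : IncGraph) (βB : Fin k → I.B) (βR : ℕ → I.R) (g : GuardF k) : Prop :=
  ∀ i j, g.f i = some j → I.E (βB j) (βR i)

/-- Satisfaction of a formula in an interpretation `(I, β)`. -/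
def FmlSat {k : ℕ} (I : IncGraph) : Fml k → (Fin k → I.B) → (ℕ → I.R) → Prop
  | Fml.top, _, _ => True
  | Fml.E j i, βB, βR => I.E (βB j) (βR i)
  | Fml.beq j j', βB, _ => βB j = βB j'
  | Fml.req i i', _, βR => βR i = βR i'
  | Fml.not ψ, βB, βR => ¬ FmlSat I ψ βB βR
  | Fml.and ψ₁ ψ₂, βB, βR => FmlSat I ψ₁ βB βR ∧ FmlSat I ψ₂ βB βR
  | Fml.exR n s g ψ, βB, βR =>
      n ≤ Nat.card {a : ↥s → I.R //
        GuardSat I βB (updR βR s a) g ∧ FmlSat I ψ βB (updR βR s a)}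
  | Fml.exB n s g ψ, βB, βR =>
      n ≤ Nat.card {a : ↥s → I.B //
        GuardSat I (updB βB s a) βR g ∧ FmlSat I ψ (updB βB s a) βR}

/-- The formulas of the logic `GC^k`. -/
inductive IsGC (k : ℕ) : Fml k → Prop
  | top : IsGC k Fml.top
  | E (j : Fin k) (i : ℕ) : IsGC k (Fml.E j i)
  | beq (j j' : Fin k) : IsGC k (Fml.beq j j')
  | req (i i' : ℕ) : IsGC k (Fml.req i i')
  | not {ψ : Fml k} : IsGC k ψ → IsGC k ψ.not
  | and {ψ₁ ψ₂ : Fml k} : IsGC k ψ₁ → IsGC k ψ₂ → IsGC k (ψ₁.and ψ₂)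
  | exR {ψ : Fml k} (n : ℕ) (s : Finset ℕ) (g : GuardF k) :
      IsGC k ψ → g.dom = freeR ψ → 1 ≤ n → s.Nonempty → s ⊆ g.dom →
      IsGC k (Fml.exR n s g ψ)
  | exB {ψ : Fml k} (n : ℕ) (s : Finset (Fin k)) (g : GuardF k) :
      IsGC k ψ → g.dom = freeR ψ → 1 ≤ n → s.Nonempty → s ⊆ g.img ∪ freeB ψ →
      IsGC k (Fml.exB n s g ψ)

/-- The normal form `NGC^k`: `NGC k g ψ` expresses that `(α_g ∧ ψ)` is a formula
of the fragment `NGC^k`. -/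
inductive NGC (k : ℕ) : GuardF k → Fml k → Prop
  | E {g : GuardF k} (j : Fin k) (i : ℕ) : g.dom = {i} → NGC k g (Fml.E j i)
  | beq {g : GuardF k} (j j' : Fin k) : g.dom = ∅ → NGC k g (Fml.beq j j')
  | req {g : GuardF k} (i i' : ℕ) : g.dom = {i, i'} → NGC k g (Fml.req i i')
  | not {g : GuardF k} {ψ : Fml k} : NGC k g ψ → NGC k g ψ.not
  | and {g₁ g₂ : GuardF k} {ψ₁ ψ₂ : Fml k} :
      NGC k g₁ ψ₁ → NGC k g₂ ψ₂ → GuardF.Compatible g₁ g₂ →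
      NGC k (g₁.union g₂) (ψ₁.and ψ₂)
  | exR {g : GuardF k} {ψ : Fml k} (n : ℕ) (s : Finset ℕ) :
      NGC k g ψ → 1 ≤ n → s.Nonempty → s ⊆ g.dom →
      NGC k (g.remove s) (Fml.exR n s g ψ)
  | exB {g g' : GuardF k} {ψ : Fml k} (n : ℕ) (s : Finset (Fin k)) :
      NGC k g ψ → 1 ≤ n → s.Nonempty → s ⊆ g.img ∪ freeB ψ →
      g'.dom = g.dom →
      (∀ i ∈ g.dom, ∃ j, g'.f i = some j ∧ (g.f i = some j ∨ j ∈ s ∨ j ∉ g.img)) →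
      NGC k g' (Fml.exB n s g ψ)

/-- Indistinguishability of two incidence graphs by sentences of `GC^k`. -/
def GCEquiv (k : ℕ) (I I' : IncGraph) : Prop :=
  ∀ φ : Fml k, IsGC k φ → freeR φ = ∅ → freeB φ = ∅ →
    ((∀ βB βR, FmlSat I φ βB βR) ↔ (∀ βB βR, FmlSat I' φ βB βR))

/-! ### k-labeled incidence graphs -/

/-- A `k`-labeled incidence graph. -/
structure KLI (k : ℕ) where
  I : IncGraph
  r : ℕ → Option I.R
  b : Fin k → Option I.B
  g : GuardF k
  fin_r : {i | (r i).isSome}.Finite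

namespace KLI

variable {k : ℕ}

/-- The set of red labels used. -/
def domR (L : KLI k) : Finset ℕ := L.fin_r.toFinset

/-- The set of blue labels used. -/
def domB (L : KLI k) : Finset (Fin k) := Finset.univ.filter fun j => (L.b j).isSome

/-- `L` has real guards with respect to the partial map `f`. -/
def realGuardsWrt (L : KLI k) (f : ℕ → Option (Fin k)) : Prop :=
  ∀ i j, f i = some j → ∃ v e, L.r i = some v ∧ L.b j = some e ∧ L.I.E e v

/-- `L` has real guards. -/
def realGuards (L : KLI k) : Prop := L.realGuardsWrt L.g.f

/-- Removing red labels. -/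
def removeR (L : KLI k) (X : Finset ℕ) : KLI k where
  I := L.I
  r := fun i => if i ∈ X then none else L.r i
  b := L.b
  g := L.g.remove X
  fin_r := by
    apply L.fin_r.subset
    intro i hi
    simp only [Set.mem_setOf_eq] at hi ⊢
    by_cases h : i ∈ X
    · simp [h] at hi
    · simpa [h] using hi

/-- Removing blue labels. -/
def removeB (L : KLI k) (X : Finset (Fin k)) : KLI k where
  I := L.I
  r := L.r
  b := fun j => if j ∈ X then none else L.b j
  g := L.g
  fin_r := L.fin_r

/-- Moving the red labels in `X` onto the nodes given by `a`. -/
def reseatR (L : KLI k) (X : Finset ℕ) (a : ↥X → L.I.R) : KLI k where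
  I := L.I
  r := fun i => if h : i ∈ X then some (a ⟨i, h⟩) else L.r i
  b := L.b
  g := L.g
  fin_r := by
    apply (L.fin_r.union X.finite_toSet).subset
    intro i hi
    simp only [Set.mem_setOf_eq] at hi
    by_cases h : i ∈ X
    · exact Or.inr (by simpa using h)
    · exact Or.inl (by simpa [h] using hi)

/-- Moving the blue labels in `X` onto the nodes given by `a`. -/
def reseatB (L : KLI k) (X : Finset (Fin k)) (a : ↥X → L.I.B) : KLI k where
  I := L.I
  r := L.r
  b := fun j => if h : j ∈ X then some (a ⟨j, h⟩) else L.b j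
  g := L.g
  fin_r := L.fin_r

/-- The identifications of red nodes when glueing. -/
def glueRelR (L₁ L₂ : KLI k) : (L₁.I.R ⊕ L₂.I.R) → (L₁.I.R ⊕ L₂.I.R) → Prop :=
  fun x y => ∃ i v₁ v₂, L₁.r i = some v₁ ∧ L₂.r i = some v₂ ∧ x = Sum.inl v₁ ∧ y = Sum.inr v₂

/-- The identifications of blue nodes when glueing. -/
def glueRelB (L₁ L₂ : KLI k) : (L₁.I.B ⊕ L₂.I.B) → (L₁.I.B ⊕ L₂.I.B) → Prop :=
  fun x y => ∃ j e₁ e₂, L₁.b j = some e₁ ∧ L₂.b j = some e₂ ∧ x = Sum.inl e₁ ∧ y = Sum.inr e₂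

/-- The incidence graph underlying the glueing of two labeled incidence graphs. -/
def glueIG (L₁ L₂ : KLI k) : IncGraph where
  R := Quot (glueRelR L₁ L₂)
  B := Quot (glueRelB L₁ L₂)
  finR := Finite.of_surjective (Quot.mk (glueRelR L₁ L₂))
    (fun q => Quot.inductionOn q fun a => ⟨a, rfl⟩)
  finB := Finite.of_surjective (Quot.mk (glueRelB L₁ L₂))
    (fun q => Quot.inductionOn q fun a => ⟨a, rfl⟩)
  E := fun e v =>
    (∃ e₁ v₁, L₁.I.E e₁ v₁ ∧ e = Quot.mk (glueRelB L₁ L₂) (Sum.inl e₁) ∧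
      v = Quot.mk (glueRelR L₁ L₂) (Sum.inl v₁)) ∨
    (∃ e₂ v₂, L₂.I.E e₂ v₂ ∧ e = Quot.mk (glueRelB L₁ L₂) (Sum.inr e₂) ∧
      v = Quot.mk (glueRelR L₁ L₂) (Sum.inr v₂))
  covered := by
    intro v
    induction v using Quot.ind with
    | _ x =>
      cases x with
      | inl v₁ =>
        obtain ⟨e₁, he⟩ := L₁.I.covered v₁
        exact ⟨Quot.mk (glueRelB L₁ L₂) (Sum.inl e₁), Or.inl ⟨e₁, v₁, he, rfl, rfl⟩⟩
      | inr v₂ =>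
        obtain ⟨e₂, he⟩ := L₂.I.covered v₂
        exact ⟨Quot.mk (glueRelB L₁ L₂) (Sum.inr e₂), Or.inr ⟨e₂, v₂, he, rfl, rfl⟩⟩

/-- Glueing two `k`-labeled incidence graphs. -/
def glue (L₁ L₂ : KLI k) : KLI k where
  I := glueIG L₁ L₂
  r := fun i =>
    match L₁.r i with
    | some v => some (Quot.mk (glueRelR L₁ L₂) (Sum.inl v))
    | none => (L₂.r i).map fun v => Quot.mk (glueRelR L₁ L₂) (Sum.inr v)
  b := fun j =>
    match L₁.b j with
    | some e => some (Quot.mk (glueRelB L₁ L₂) (Sum.inl e))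
    | none => (L₂.b j).map fun e => Quot.mk (glueRelB L₁ L₂) (Sum.inr e)
  g := L₁.g.union L₂.g
  fin_r := by
    apply (L₁.fin_r.union L₂.fin_r).subset
    intro i hi
    simp only [Set.mem_setOf_eq] at hi
    cases h₁ : L₁.r i with
    | some v => exact Or.inl (by simp [h₁])
    | none =>
      right
      rw [h₁] at hi
      cases h₂ : L₂.r i with
      | none => rw [h₂] at hi; exact (Bool.false_ne_true hi).elim
      | some v => simp [h₂]

/-- The `k`-labeled incidence graph `L^f` defined by a guard function `f`. -/
def guardKLI (f : GuardF k) : KLI k where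
  I := { R := {i : ℕ // i ∈ f.dom}
         B := {j : Fin k // j ∈ f.img}
         E := fun j i => f.f i.1 = some j.1
         covered := by
           rintro ⟨i, hi⟩
           have hs : (f.f i).isSome := GuardF.mem_dom.mp hi
           have hj : (f.f i).get hs ∈ f.img :=
             GuardF.mem_img.mpr ⟨i, (Option.some_get hs).symm⟩
           exact ⟨⟨(f.f i).get hs, hj⟩, (Option.some_get hs).symm⟩ }
  r := fun i => if h : i ∈ f.dom then some ⟨i, h⟩ else none
  b := fun j => if h : j ∈ f.img then some ⟨j, h⟩ else none
  g := f
  fin_r := by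
    apply f.dom.finite_toSet.subset
    intro i hi
    simp only [Set.mem_setOf_eq] at hi
    by_cases h : i ∈ f.dom
    · simpa using h
    · simp [h] at hi

/-- Applying a transition `f` to `L`. -/
def applyTransition (L : KLI k) (f : GuardF k) : KLI k :=
  (guardKLI f).glue (L.removeB (L.g.img ∩ f.img ∩ L.domB))

end KLI

/-- The class `GLI^k` of guarded `k`-labeled incidence graphs. -/
inductive GLI (k : ℕ) : KLI k → Prop
  | base (L : KLI k) :
      (∀ v : L.I.R, ∃ i, L.r i = some v) →
      (∀ e : L.I.B, ∃ j, L.b j = some e) →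
      (∀ i, (L.r i).isSome ↔ (L.g.f i).isSome) →
      L.realGuards → GLI k L
  | removeR (L : KLI k) (X : Finset ℕ) :
      GLI k L → (∀ i ∈ X, (L.r i).isSome) → GLI k (L.removeR X)
  | removeB (L : KLI k) (X : Finset (Fin k)) :
      GLI k L → (∀ j ∈ X, (L.b j).isSome ∧ j ∉ L.g.img) → GLI k (L.removeB X)
  | trans (L : KLI k) (f : GuardF k) :
      GLI k L → L.g.IsTransition f → GLI k (L.applyTransition f)
  | glue (L L' : KLI k) :
      GLI k L → GLI k L' → GuardF.Compatible L.g L'.g → GLI k (L.glue L')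

/-- Two `k`-labeled incidence graphs are compatible. -/
def KCompatible {k : ℕ} (L L' : KLI k) : Prop :=
  (∀ i, (L.r i).isSome ↔ (L'.r i).isSome) ∧
  (∀ j, (L.b j).isSome ↔ (L'.b j).isSome) ∧ L.g.f = L'.g.f

/-- Homomorphisms between `k`-labeled incidence graphs: they respect the labels
and ignore the guard functions. -/
def KHom {k : ℕ} (L L' : KLI k) : Type :=
  {h : (L.I.R → L'.I.R) × (L.I.B → L'.I.B) //
    (∀ e v, L.I.E e v → L'.I.E (h.2 e) (h.1 v)) ∧
    (∀ i v, L.r i = some v → L'.r i = some (h.1 v)) ∧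
    (∀ j e, L.b j = some e → L'.b j = some (h.2 e))}

/-- The number of homomorphisms between `k`-labeled incidence graphs. -/
def khom {k : ℕ} (L L' : KLI k) : ℕ := Nat.card (KHom L L')

/-! ### Quantum incidence graphs -/

/-- A formal linear combination of `k`-labeled incidence graphs, given as a list
of coefficient/component pairs. -/
abbrev QIG (k : ℕ) := List (ℝ × KLI k)

/-- `Q` is a `k`-labeled quantum incidence graph: it is a nonempty formal linear
combination of pairwise compatible `k`-labeled incidence graphs. -/
def IsQuantum {k : ℕ} (Q : QIG k) : Prop :=
  Q ≠ [] ∧ ∀ p ∈ Q, ∀ q ∈ Q, KCompatible p.2 q.2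

/-- Homomorphism count from a quantum incidence graph. -/
def qhom {k : ℕ} (Q : QIG k) (L : KLI k) : ℝ :=
  (Q.map fun p => p.1 * (khom p.2 L : ℝ)).sum

/-- Glueing of quantum incidence graphs. -/
def qglue {k : ℕ} (Q Q' : QIG k) : QIG k :=
  Q.flatMap fun p => Q'.map fun q => (p.1 * q.1, p.2.glue q.2)

/-- Componentwise removal of red labels. -/
def qremoveR {k : ℕ} (Q : QIG k) (X : Finset ℕ) : QIG k :=
  Q.map fun p => (p.1, p.2.removeR X)

/-- Componentwise removal of blue labels. -/
def qremoveB {k : ℕ} (Q : QIG k) (X : Finset (Fin k)) : QIG k :=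
  Q.map fun p => (p.1, p.2.removeB X)

/-- Componentwise application of a transition. -/
def qapplyTransition {k : ℕ} (Q : QIG k) (f : GuardF k) : QIG k :=
  Q.map fun p => (p.1, p.2.applyTransition f)

/-- Guarded quantum incidence graphs: all components belong to `GLI^k`. -/
def IsQGLI {k : ℕ} (Q : QIG k) : Prop := IsQuantum Q ∧ ∀ p ∈ Q, GLI k p.2

end

set_option linter.unusedSectionVars false


noncomputable section BMEHD

namespace BMEHD

/-! Generic "reaches by iterating f within P" machinery. -/

def Reaches {α : Type*} (f : α → α) (P : α → Prop) (x y : α) : Prop :=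
  ∃ N, f^[N] x = y ∧ ∀ j ≤ N, P (f^[j] x)

theorem Reaches.refl {α : Type*} {f : α → α} {P : α → Prop} {x : α} (hx : P x) :
    Reaches f P x x := ⟨0, rfl, by intro j hj; interval_cases j; simpa⟩

theorem Reaches.head {α : Type*} {f : α → α} {P : α → Prop} {x y : α} (hx : P x)
    (h : Reaches f P (f x) y) : Reaches f P x y := by
  obtain ⟨N, h1, h2⟩ := h
  refine ⟨N + 1, by rwa [Function.iterate_succ_apply], ?_⟩
  intro j hj
  cases j with
  | zero => simpa
  | succ j => rw [Function.iterate_succ_apply]; exact h2 j (by omega)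

theorem Reaches.trans {α : Type*} {f : α → α} {P : α → Prop} {x y z : α}
    (h : Reaches f P x y) (h' : Reaches f P y z) : Reaches f P x z := by
  obtain ⟨N, h1, h2⟩ := h
  obtain ⟨M, h3, h4⟩ := h'
  refine ⟨M + N, by rw [Function.iterate_add_apply, h1, h3], ?_⟩
  intro j hj
  rcases le_or_gt j N with hc | hc
  · exact h2 j hc
  · have : j = (j - N) + N := by omega
    rw [this, Function.iterate_add_apply, h1]
    exact h4 (j - N) (by omega)

theorem Reaches.mono {α : Type*} {f : α → α} {P Q : α → Prop} {x y : α}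
    (hPQ : ∀ a, P a → Q a) (h : Reaches f P x y) : Reaches f Q x y := by
  obtain ⟨N, h1, h2⟩ := h
  exact ⟨N, h1, fun j hj => hPQ _ (h2 j hj)⟩

theorem Reaches.first {α : Type*} {f : α → α} {P : α → Prop} {x y : α}
    (h : Reaches f P x y) : P x := by
  obtain ⟨N, h1, h2⟩ := h
  simpa using h2 0 (Nat.zero_le N)

theorem Reaches.last {α : Type*} {f : α → α} {P : α → Prop} {x y : α}
    (h : Reaches f P x y) : P y := by
  obtain ⟨N, h1, h2⟩ := h
  rw [← h1]; exact h2 N le_rfl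

/-! ### The graph generated by a parent map -/

def pgraph {V : Type*} (par : V → V) : SimpleGraph V where
  Adj u v := u ≠ v ∧ (par u = v ∨ par v = u)
  symm := by constructor; rintro u v ⟨h1, h2⟩; exact ⟨h1.symm, h2.symm⟩
  loopless := by constructor; rintro u ⟨h1, _⟩; exact h1 rfl

section Parent

variable {V : Type*} (par : V → V) (d : V → ℕ) (ω : V)
variable (hω : par ω = ω) (hd0 : d ω = 0) (hpar : ∀ v, v ≠ ω → d (par v) + 1 = d v)

theorem pg_adj {u v : V} : (pgraph par).Adj u v ↔ u ≠ v ∧ (par u = v ∨ par v = u) :=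
  Iff.rfl

include hω hpar in
theorem pg_grade {u v : V} (h : (pgraph par).Adj u v) :
    (par u = v ∧ d u = d v + 1) ∨ (par v = u ∧ d v = d u + 1) := by
  obtain ⟨hne, hc⟩ := h
  rcases hc with hc | hc
  · left
    refine ⟨hc, ?_⟩
    have hu : u ≠ ω := by rintro rfl; rw [hω] at hc; exact hne hc
    rw [← hpar u hu, hc]
  · right
    refine ⟨hc, ?_⟩
    have hv : v ≠ ω := by rintro rfl; rw [hω] at hc; exact hne hc.symm
    rw [← hpar v hv, hc]

include hω hpar in
theorem pg_parent_ne {v : V} (hv : v ≠ ω) : par v ≠ v := by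
  intro h
  have := hpar v hv
  rw [h] at this
  omega

include hω hpar in
theorem pg_adj_parent {v : V} (hv : v ≠ ω) : (pgraph par).Adj v (par v) :=
  ⟨fun h => pg_parent_ne par d ω hω hpar hv h.symm, Or.inl rfl⟩

include hω hd0 hpar in
theorem pg_walk_to_root (v : V) : ∃ p : (pgraph par).Walk v ω, p.length = d v := by
  generalize hn : d v = n
  induction n generalizing v with
  | zero =>
    have : v = ω := by
      by_contra hv
      have := hpar v hv
      omega
    subst this
    exact ⟨SimpleGraph.Walk.nil, rfl⟩
  | succ n ih =>
    have hv : v ≠ ω := by rintro rfl; rw [hd0] at hn; omega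
    have hd : d (par v) = n := by have := hpar v hv; omega
    obtain ⟨p, hp⟩ := ih (par v) hd
    exact ⟨SimpleGraph.Walk.cons (pg_adj_parent par d ω hω hpar hv) p, by simp [hp]⟩

include hω hd0 hpar in
theorem pg_reachable (v : V) : (pgraph par).Reachable v ω := by
  obtain ⟨p, _⟩ := pg_walk_to_root par d ω hω hd0 hpar v
  exact ⟨p⟩

include hω hd0 hpar in
theorem pg_connected : (pgraph par).Connected := by
  rw [SimpleGraph.connected_iff_exists_forall_reachable]
  exact ⟨ω, fun v => (pg_reachable par d ω hω hd0 hpar v).symm⟩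

include hω hpar in
theorem pg_walk_length {u v : V} (p : (pgraph par).Walk u v) : d v ≤ d u + p.length := by
  induction p with
  | nil => simp
  | cons h q ih =>
    rcases pg_grade par d ω hω hpar h with ⟨_, h2⟩ | ⟨_, h2⟩ <;> simp <;> omega

include hω hd0 hpar in
theorem pg_dist (v : V) : (pgraph par).dist ω v = d v := by
  apply le_antisymm
  · obtain ⟨p, hp⟩ := pg_walk_to_root par d ω hω hd0 hpar v
    calc (pgraph par).dist ω v ≤ p.reverse.length := SimpleGraph.dist_le _
    _ = d v := by rw [SimpleGraph.Walk.length_reverse, hp]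
  · obtain ⟨p, hp⟩ :=
      ((pg_reachable par d ω hω hd0 hpar v).symm).exists_walk_length_eq_dist
    have := pg_walk_length par d ω hω hpar p
    rw [hp] at this
    omega


include hω hpar in
theorem pg_acyclic : (pgraph par).IsAcyclic := by
  intro u c hc
  -- pick a vertex of maximal depth on the cycle
  classical
  obtain ⟨x, hxmem, hxmax⟩ :=
    Finset.exists_max_image c.support.toFinset d
      (by simp [List.toFinset_eq_empty_iff, Finset.nonempty_iff_ne_empty,
        c.support_ne_nil])
  rw [List.mem_toFinset] at hxmem
  have hmax : ∀ a ∈ c.support, d a ≤ d x := by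
    intro a ha; exact hxmax a (List.mem_toFinset.mpr ha)
  set c' := c.rotate x hxmem with hc'def
  have hc' : c'.IsCycle := hc.rotate hxmem
  have hsupp : ∀ a, a ∈ c'.support → a ∈ c.support := by
    intro a ha
    rw [SimpleGraph.Walk.support_eq_cons c'] at ha
    rcases List.mem_cons.mp ha with rfl | ha
    · exact hxmem
    · rw [hc'def] at ha
      have h2 : a ∈ c.support.tail :=
        (SimpleGraph.Walk.support_rotate c x hxmem).mem_iff.mp ha
      exact List.mem_of_mem_tail h2
  cases hcc : c' with
  | nil =>
    rw [hcc] at hc'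
    exact SimpleGraph.Walk.IsCycle.not_of_nil hc'
  | cons h q =>
    rename_i y
    -- h : Adj x y, q : Walk y x
    have hyne : y ≠ x := h.ne'
    have hy : y ∈ c'.support := by
      rw [hcc]
      simp only [SimpleGraph.Walk.support_cons, List.mem_cons]
      right
      exact q.start_mem_support
    have hparxy : par x = y := by
      rcases pg_grade par d ω hω hpar h with ⟨h1, _⟩ | ⟨_, h2⟩
      · exact h1
      · exfalso
        have := hmax y (hsupp y hy)
        omega
    cases hqq : q.reverse with
    | nil =>
      exact (hyne (SimpleGraph.Walk.eq_of_length_eq_zero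
        (by simpa using (congrArg SimpleGraph.Walk.length hqq)))).elim
    | cons h2 q2 =>
      rename_i z
      -- h2 : Adj x z
      have hz : z ∈ c'.support := by
        rw [hcc]
        simp only [SimpleGraph.Walk.support_cons, List.mem_cons]
        right
        have hzz : z ∈ q.reverse.support := by
          rw [hqq]
          simp only [SimpleGraph.Walk.support_cons, List.mem_cons]
          right
          exact q2.start_mem_support
        rw [SimpleGraph.Walk.support_reverse] at hzz
        exact List.mem_reverse.mp hzz
      have hparxz : par x = z := by
        rcases pg_grade par d ω hω hpar h2 with ⟨h1, _⟩ | ⟨_, hh2⟩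
        · exact h1
        · exfalso
          have := hmax z (hsupp z hz)
          omega
      have hyz : y = z := by rw [← hparxy, hparxz]
      -- edge s(x,y) occurs both first and last in the cycle
      have hnodup : c'.edges.Nodup := hc'.isCircuit.isTrail.edges_nodup
      rw [hcc] at hnodup
      simp only [SimpleGraph.Walk.edges_cons, List.nodup_cons] at hnodup
      apply hnodup.1
      have : s(x, z) ∈ q.reverse.edges := by
        rw [hqq]; simp [SimpleGraph.Walk.edges_cons]
      rw [SimpleGraph.Walk.edges_reverse, List.mem_reverse] at this
      subst hyz
      exact this

include hω hd0 hpar in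
theorem pg_isTree : (pgraph par).IsTree :=
  ⟨pg_connected par d ω hω hd0 hpar, pg_acyclic par d ω hω hpar⟩

include hω hd0 hpar in
theorem pg_children (t : V) :
    {c | (pgraph par).Adj t c ∧ (pgraph par).dist ω c = (pgraph par).dist ω t + 1}
      = {c | par c = t ∧ c ≠ t} := by
  ext c
  simp only [Set.mem_setOf_eq, pg_dist par d ω hω hd0 hpar]
  constructor
  · rintro ⟨hadj, hdist⟩
    rcases pg_grade par d ω hω hpar hadj with ⟨h1, h2⟩ | ⟨h1, _⟩
    · omega
    · exact ⟨h1, hadj.ne'⟩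
  · rintro ⟨hpc, hne⟩
    have hcω : c ≠ ω := by
      rintro rfl
      rw [hω] at hpc
      exact hne hpc
    have hd := hpar c hcω
    rw [hpc] at hd
    exact ⟨⟨fun h => hne h.symm, Or.inr hpc⟩, by omega⟩

theorem pg_induce_connected (S : Set V) (r : V) (hr : r ∈ S)
    (h : ∀ v ∈ S, Reaches par (· ∈ S) v r) :
    ((pgraph par).induce S).Connected := by
  rw [SimpleGraph.connected_iff_exists_forall_reachable]
  refine ⟨⟨r, hr⟩, ?_⟩
  rintro ⟨v, hv⟩
  suffices hgen : ∀ N (v : V) (hv : v ∈ S), par^[N] v = r →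
      (∀ j ≤ N, par^[j] v ∈ S) →
      ((pgraph par).induce S).Reachable ⟨v, hv⟩ ⟨r, hr⟩ by
    obtain ⟨N, h1, h2⟩ := h v hv
    exact (hgen N v hv h1 h2).symm
  intro N
  induction N with
  | zero =>
    intro v hv h1 _
    simp only [Function.iterate_zero, id] at h1
    subst h1
    rfl
  | succ N ih =>
    intro v hv h1 h2
    by_cases hpv : par v = v
    · have : par^[N+1] v = v := Function.iterate_fixed hpv (N+1)
      rw [this] at h1
      subst h1
      rfl
    · have hmem : par v ∈ S := by
        have := h2 1 (by omega)
        simpa using this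
      have hadj : ((pgraph par).induce S).Adj ⟨v, hv⟩ ⟨par v, hmem⟩ :=
        ⟨fun hh => hpv hh.symm, Or.inl rfl⟩
      refine hadj.reachable.trans (ih (par v) hmem ?_ ?_)
      · rw [← Function.iterate_succ_apply]; exact h1
      · intro j hj
        rw [← Function.iterate_succ_apply]
        exact h2 (j+1) (by omega)

end Parent


/-! ### Rooted structure on a given tree -/

section OldTree

variable {T : Type*} [Finite T] (G : SimpleGraph T) (hT : G.IsTree) (t0 : T)

include hT in
theorem exists_tparent {t : T} (ht : t ≠ t0) :
    ∃ u, G.Adj t u ∧ G.dist t0 u + 1 = G.dist t0 t := by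
  obtain ⟨p, hp⟩ := (hT.isConnected t0 t).exists_walk_length_eq_dist
  cases hq : p.reverse with
  | nil =>
    exfalso
    apply ht
    have : p.length = 0 := by
      have := congrArg SimpleGraph.Walk.length hq
      simpa using this
    have := SimpleGraph.Walk.eq_of_length_eq_zero this
    exact this.symm
  | cons h q =>
    rename_i u
    refine ⟨u, h, ?_⟩
    have h1 : G.dist t0 u ≤ q.length := by
      rw [SimpleGraph.dist_comm]
      simpa using SimpleGraph.dist_le q
    have h2 : q.length + 1 = G.dist t0 t := by
      have := congrArg SimpleGraph.Walk.length hq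
      simp only [SimpleGraph.Walk.length_reverse, SimpleGraph.Walk.length_cons] at this
      omega
    have h3 : G.dist t0 t ≤ G.dist t0 u + 1 := by
      have htri := hT.isConnected.dist_triangle (u := t0) (v := u) (w := t)
      have : G.dist u t = 1 := SimpleGraph.dist_eq_one_iff_adj.mpr h.symm
      omega
    omega

open Classical in
noncomputable def tpar : T → T := fun t =>
  if h : t = t0 then t else (exists_tparent G hT t0 h).choose

theorem tpar_root : tpar G hT t0 t0 = t0 := by
  rw [tpar]
  simp

theorem tpar_spec {t : T} (ht : t ≠ t0) :
    G.Adj t (tpar G hT t0 t) ∧ G.dist t0 (tpar G hT t0 t) + 1 = G.dist t0 t := by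
  rw [tpar]
  rw [dif_neg ht]
  exact (exists_tparent G hT t0 ht).choose_spec

include hT in
theorem tree_grade {u v : T} (h : G.Adj u v) :
    G.dist t0 u = G.dist t0 v + 1 ∨ G.dist t0 v = G.dist t0 u + 1 := by
  classical
  -- first : depths differ
  have key : ∀ a b : T, G.Adj a b → G.dist t0 a = G.dist t0 b → False := by
    intro a b hab heq
    obtain ⟨Qa, hQa, hQalen⟩ := hT.isConnected.exists_path_of_dist t0 a
    obtain ⟨Qb, hQb, hQblen⟩ := hT.isConnected.exists_path_of_dist t0 b
    have hanotin : a ∉ Qb.support := by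
      intro hmem
      have h1 : G.dist t0 a ≤ (Qb.takeUntil a hmem).length :=
        SimpleGraph.dist_le _
      have h2 : (Qb.takeUntil a hmem).length + (Qb.dropUntil a hmem).length
          = Qb.length := by
        have h5 := congrArg SimpleGraph.Walk.length (Qb.take_spec hmem)
        rwa [SimpleGraph.Walk.length_append] at h5
      have h3 : G.dist a b ≤ (Qb.dropUntil a hmem).length :=
        SimpleGraph.dist_le _
      have h4 : G.dist a b = 1 := SimpleGraph.dist_eq_one_iff_adj.mpr hab
      omega
    have hR1 : (SimpleGraph.Walk.cons hab Qb.reverse).IsPath := by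
      rw [SimpleGraph.Walk.cons_isPath_iff]
      refine ⟨hQb.reverse, ?_⟩
      rwa [SimpleGraph.Walk.support_reverse, List.mem_reverse]
    have heqp := (hT.existsUnique_path a t0).unique hR1 hQa.reverse
    have := congrArg SimpleGraph.Walk.length heqp
    simp only [SimpleGraph.Walk.length_cons, SimpleGraph.Walk.length_reverse] at this
    omega
  have h1 : G.dist t0 u ≤ G.dist t0 v + 1 := by
    have htri := hT.isConnected.dist_triangle (u := t0) (v := v) (w := u)
    have : G.dist v u = 1 := SimpleGraph.dist_eq_one_iff_adj.mpr h.symm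
    omega
  have h2 : G.dist t0 v ≤ G.dist t0 u + 1 := by
    have htri := hT.isConnected.dist_triangle (u := t0) (v := u) (w := v)
    have : G.dist u v = 1 := SimpleGraph.dist_eq_one_iff_adj.mpr h
    omega
  have h3 : G.dist t0 u ≠ G.dist t0 v := fun heq => key u v h heq
  omega

include hT in
theorem tpar_unique {u v : T} (h : G.Adj u v)
    (hd : G.dist t0 v + 1 = G.dist t0 u) : tpar G hT t0 u = v := by
  classical
  have hu : u ≠ t0 := by
    intro hh
    rw [hh, SimpleGraph.dist_self] at hd
    omega
  obtain ⟨hadj', hd'⟩ := tpar_spec G hT t0 hu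
  set v' := tpar G hT t0 u with hv'
  by_contra hne
  obtain ⟨Qv, hQv, hQvlen⟩ := hT.isConnected.exists_path_of_dist t0 v
  obtain ⟨Qv', hQv', hQv'len⟩ := hT.isConnected.exists_path_of_dist t0 v'
  have hnotin : ∀ (w : T) (Q : G.Walk t0 w), Q.length = G.dist t0 w →
      G.dist t0 w + 1 = G.dist t0 u → u ∉ Q.support := by
    intro w Q hQlen hdw hmem
    have h1 : G.dist t0 u ≤ (Q.takeUntil u hmem).length := SimpleGraph.dist_le _
    have h2 : (Q.takeUntil u hmem).length ≤ Q.length :=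
      SimpleGraph.Walk.length_takeUntil_le Q hmem
    omega
  have hR1 : (SimpleGraph.Walk.cons h Qv.reverse).IsPath := by
    rw [SimpleGraph.Walk.cons_isPath_iff]
    refine ⟨hQv.reverse, ?_⟩
    rw [SimpleGraph.Walk.support_reverse, List.mem_reverse]
    exact hnotin v Qv hQvlen hd
  have hR2 : (SimpleGraph.Walk.cons hadj' Qv'.reverse).IsPath := by
    rw [SimpleGraph.Walk.cons_isPath_iff]
    refine ⟨hQv'.reverse, ?_⟩
    rw [SimpleGraph.Walk.support_reverse, List.mem_reverse]
    exact hnotin v' Qv' hQv'len hd'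
  have heqp := (hT.existsUnique_path u t0).unique hR2 hR1
  -- v' lies on the path R1, hence on Qv, hence v' = v
  have hv'mem : v' ∈ (SimpleGraph.Walk.cons h Qv.reverse).support := by
    rw [← heqp]
    simp only [SimpleGraph.Walk.support_cons, List.mem_cons]
    right
    exact Qv'.reverse.start_mem_support
  simp only [SimpleGraph.Walk.support_cons, List.mem_cons] at hv'mem
  rcases hv'mem with hv'mem | hv'mem
  · exact (hadj'.ne hv'mem.symm).elim
  · rw [SimpleGraph.Walk.support_reverse, List.mem_reverse] at hv'mem
    have h1 : G.dist t0 v' ≤ (Qv.takeUntil v' hv'mem).length := SimpleGraph.dist_le _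
    have h2 : (Qv.takeUntil v' hv'mem).length + (Qv.dropUntil v' hv'mem).length
        = Qv.length := by
      have h5 := congrArg SimpleGraph.Walk.length (Qv.take_spec hv'mem)
      rwa [SimpleGraph.Walk.length_append] at h5
    have h3 : (Qv.dropUntil v' hv'mem).length = 0 := by omega
    exact hne (SimpleGraph.Walk.eq_of_length_eq_zero h3)

include hT in
theorem tree_merge {u v : T} (p : G.Walk u v) (S : Set T)
    (hp : ∀ x ∈ p.support, x ∈ S) :
    ∃ z, Reaches (tpar G hT t0) (· ∈ S) u z ∧ Reaches (tpar G hT t0) (· ∈ S) v z := by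
  induction p with
  | nil =>
    rename_i a
    exact ⟨a, Reaches.refl (hp a (by simp)), Reaches.refl (hp a (by simp))⟩
  | cons h q ih =>
    rename_i a c b
    have ha : a ∈ S := hp a (by simp [SimpleGraph.Walk.support_cons])
    have hq : ∀ x ∈ q.support, x ∈ S := by
      intro x hx
      apply hp
      rw [SimpleGraph.Walk.support_cons]
      exact List.mem_cons_of_mem _ hx
    obtain ⟨z, hcz, hvz⟩ := ih hq
    have hc : c ∈ S := hcz.first
    rcases tree_grade G hT t0 h with hg | hg
    · -- dist a = dist c + 1, so tpar a = c
      have hpa : tpar G hT t0 a = c := tpar_unique G hT t0 h hg.symm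
      exact ⟨z, Reaches.head ha (by rwa [hpa]), hvz⟩
    · -- tpar c = a
      have hpc : tpar G hT t0 c = a := tpar_unique G hT t0 h.symm hg.symm
      obtain ⟨n, h1, h2⟩ := hcz
      cases n with
      | zero =>
        simp only [Function.iterate_zero, id] at h1
        subst h1
        exact ⟨a, Reaches.refl ha,
          hvz.trans (Reaches.head hc (by rw [hpc]; exact Reaches.refl ha))⟩
      | succ n' =>
        refine ⟨z, ⟨n', ?_, ?_⟩, hvz⟩
        · rw [Function.iterate_succ_apply, hpc] at h1
          exact h1
        · intro j hj
          have := h2 (j+1) (by omega)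
          rwa [Function.iterate_succ_apply, hpc] at this

include hT in
theorem tree_chain (S : Set T) (hS : (G.induce S).Connected) :
    ∃ r ∈ S, ∀ w ∈ S, Reaches (tpar G hT t0) (· ∈ S) w r := by
  have hne : S.Nonempty := by
    obtain ⟨x⟩ := hS.nonempty
    exact ⟨x.1, x.2⟩
  obtain ⟨r, hrS, hrmin⟩ := Set.exists_min_image S (G.dist t0) S.toFinite hne
  refine ⟨r, hrS, ?_⟩
  intro w hw
  obtain ⟨p'⟩ := hS.preconnected ⟨w, hw⟩ ⟨r, hrS⟩
  let f : G.induce S →g G := ⟨Subtype.val, fun {x y} hxy => hxy⟩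
  have hsupp : ∀ x ∈ (p'.map f).support, x ∈ S := by
    intro x hx
    rw [SimpleGraph.Walk.support_map] at hx
    obtain ⟨a, _, rfl⟩ := List.mem_map.mp hx
    exact a.2
  obtain ⟨z, hwz, hrz⟩ := tree_merge G hT t0 (p'.map f) S hsupp
  obtain ⟨m, h1, h2⟩ := hrz
  have h1 : (tpar G hT t0)^[m] r = z := h1
  have h2 : ∀ j ≤ m, (tpar G hT t0)^[j] r ∈ S := h2
  have hwz : Reaches (tpar G hT t0) (· ∈ S) w z := hwz
  have key : ∀ j ≤ m, (tpar G hT t0)^[j] r = r := by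
    intro j
    induction j with
    | zero => intro _; rfl
    | succ j ihj =>
      intro hj
      have hprev := ihj (by omega)
      rw [Function.iterate_succ_apply', hprev]
      by_cases hr0 : r = t0
      · rw [hr0, tpar_root]
      · exfalso
        have hmem : tpar G hT t0 r ∈ S := by
          have := h2 (j+1) hj
          rwa [Function.iterate_succ_apply', hprev] at this
        have hspec := (tpar_spec G hT t0 hr0).2
        have := hrmin _ hmem
        omega
  have hzr : z = r := by rw [← h1, key m le_rfl]
  rwa [hzr] at hwz

include hT in
theorem tree_chain_ext (S S' : Set T) (hSS : S ⊆ S') (hS : (G.induce S).Connected)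
    (hcl : ∀ u ∈ S', u ∉ S → u ≠ t0 ∧ tpar G hT t0 u ∈ S') :
    ∃ r ∈ S', ∀ w ∈ S', Reaches (tpar G hT t0) (· ∈ S') w r := by
  obtain ⟨r, hrS, hchain⟩ := tree_chain G hT t0 S hS
  refine ⟨r, hSS hrS, ?_⟩
  intro w hw
  generalize hn : G.dist t0 w = n
  induction n using Nat.strong_induction_on generalizing w with
  | _ n ih =>
    by_cases hwS : w ∈ S
    · exact (hchain w hwS).mono (fun a ha => hSS ha)
    · obtain ⟨hwt0, hpw⟩ := hcl w hw hwS
      have hspec := (tpar_spec G hT t0 hwt0).2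
      subst hn
      exact Reaches.head hw
        (ih (G.dist t0 (tpar G hT t0 w)) (by omega) _ hpw rfl)

end OldTree


/-! ### The construction -/

section Construction

variable (I : IncGraph) (D : EHD I)

open Classical

theorem exists_root : ∃ t : D.T, ∀ s : D.T, (D.Cover s).ncard ≤ (D.Cover t).ncard := by
  have hne : Nonempty D.T := D.isTree.isConnected.nonempty
  obtain ⟨t, -, h⟩ := Set.exists_max_image (Set.univ : Set D.T)
    (fun t => (D.Cover t).ncard) Set.finite_univ Set.univ_nonempty
  exact ⟨t, fun s => h s trivial⟩

noncomputable def root : D.T := (exists_root I D).choose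

theorem root_max : ∀ s : D.T, (D.Cover s).ncard ≤ (D.Cover (root I D)).ncard :=
  (exists_root I D).choose_spec

/-- depth in the original tree -/
noncomputable def dpt : D.T → ℕ := D.tr.dist (root I D)

/-- parent in the original tree -/
noncomputable def opar : D.T → D.T := tpar D.tr D.isTree (root I D)

theorem opar_root : opar I D (root I D) = root I D := tpar_root D.tr D.isTree (root I D)

theorem opar_spec {t : D.T} (ht : t ≠ root I D) :
    D.tr.Adj t (opar I D t) ∧ dpt I D (opar I D t) + 1 = dpt I D t :=
  tpar_spec D.tr D.isTree (root I D) ht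

theorem dpt_root : dpt I D (root I D) = 0 := SimpleGraph.dist_self

theorem dpt_eq_zero {t : D.T} (h : dpt I D t = 0) : t = root I D :=
  (D.isTree.isConnected.dist_eq_zero_iff.mp h).symm

theorem opar_ne {t : D.T} (ht : t ≠ root I D) : opar I D t ≠ t := by
  intro h
  have := (opar_spec I D ht).2
  rw [h] at this
  omega

noncomputable def covF (t : D.T) : Finset I.B := (D.Cover t).toFinite.toFinset

theorem covF_mem {t : D.T} {e : I.B} : e ∈ covF I D t ↔ e ∈ D.Cover t := by
  simp [covF]

theorem covF_card (t : D.T) : (covF I D t).card = (D.Cover t).ncard :=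
  (Set.ncard_eq_toFinset_card (D.Cover t) (D.Cover t).toFinite).symm

/-- the common size of the new covers -/
noncomputable def msz : ℕ := (covF I D (root I D)).card

theorem covF_card_le (t : D.T) : (covF I D t).card ≤ msz I D := by
  rw [covF_card, msz, covF_card]
  exact root_max I D t

noncomputable def covAux : ℕ → D.T → Finset I.B
  | 0, t => covF I D t
  | (n+1), t =>
    if hY : ∃ Y : Finset I.B, covF I D t ⊆ Y ∧
        Y ⊆ covF I D t ∪ covAux n (opar I D t) ∧ Y.card = msz I D
    then hY.choose else covF I D t ∪ covAux n (opar I D t)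

/-- the padded covers -/
noncomputable def cov' (t : D.T) : Finset I.B := covAux I D (dpt I D t) t

theorem covAux_subset (n : ℕ) (t : D.T) : covF I D t ⊆ covAux I D n t := by
  classical
  cases n with
  | zero => exact subset_rfl
  | succ n =>
    rw [covAux]
    split
    · next hY => exact hY.choose_spec.1
    · exact Finset.subset_union_left

theorem cov'_subset (t : D.T) : covF I D t ⊆ cov' I D t := covAux_subset I D _ t

theorem cov'_card_and_sub :
    ∀ t : D.T, (cov' I D t).card = msz I D ∧
      (t ≠ root I D → cov' I D t ⊆ covF I D t ∪ cov' I D (opar I D t)) := by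
  classical
  intro t
  generalize hn : dpt I D t = n
  induction n generalizing t with
  | zero =>
    have ht : t = root I D := dpt_eq_zero I D hn
    subst ht
    refine ⟨?_, fun h => absurd rfl h⟩
    rw [cov', hn, covAux, msz]
  | succ n ih =>
    have ht : t ≠ root I D := by
      intro h
      rw [h, dpt_root] at hn
      omega
    have hdp : dpt I D (opar I D t) = n := by
      have := (opar_spec I D ht).2
      omega
    have hcovp : cov' I D (opar I D t) = covAux I D n (opar I D t) := by
      rw [cov', hdp]
    have hpcard : (covAux I D n (opar I D t)).card = msz I D := by
      rw [← hcovp]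
      exact (ih (opar I D t) hdp).1
    have hEx : ∃ Y : Finset I.B, covF I D t ⊆ Y ∧
        Y ⊆ covF I D t ∪ covAux I D n (opar I D t) ∧ Y.card = msz I D := by
      obtain ⟨Y, h1, h2, h3⟩ := Finset.exists_subsuperset_card_eq
        (Finset.subset_union_left (s₂ := covAux I D n (opar I D t)))
        (covF_card_le I D t)
        (le_trans (le_of_eq hpcard.symm)
          (Finset.card_le_card Finset.subset_union_right))
      exact ⟨Y, h1, h2, h3⟩
    have hcov : cov' I D t = hEx.choose := by
      rw [cov', hn, covAux, dif_pos hEx]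
    refine ⟨?_, fun _ => ?_⟩
    · rw [hcov]; exact hEx.choose_spec.2.2
    · rw [hcov, hcovp]; exact hEx.choose_spec.2.1

theorem cov'_card (t : D.T) : (cov' I D t).card = msz I D :=
  (cov'_card_and_sub I D t).1

theorem cov'_sub {t : D.T} (ht : t ≠ root I D) :
    cov' I D t ⊆ covF I D t ∪ cov' I D (opar I D t) :=
  (cov'_card_and_sub I D t).2 ht

theorem cov'_root : cov' I D (root I D) = covF I D (root I D) := by
  rw [cov', dpt_root, covAux]

/-! ### The binarised tree -/

noncomputable def chl (t : D.T) : Finset D.T :=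
  {v : D.T | opar I D v = t ∧ v ≠ t}.toFinite.toFinset

theorem chl_mem {t v : D.T} : v ∈ chl I D t ↔ opar I D v = t ∧ v ≠ t := by
  simp [chl]

noncomputable def ncd (t : D.T) : ℕ := (chl I D t).card

def NT : Type := Σ t : D.T, Fin (ncd I D t + 1)

instance : Finite (NT I D) := by
  unfold NT
  infer_instance

noncomputable def childEquiv (t : D.T) : {x // x ∈ chl I D t} ≃ Fin (ncd I D t) :=
  Fintype.equivFinOfCardEq (Fintype.card_coe _)

theorem mem_chl_self {t : D.T} (ht : t ≠ root I D) : t ∈ chl I D (opar I D t) :=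
  (chl_mem I D).mpr ⟨rfl, fun h => opar_ne I D ht h.symm⟩

noncomputable def cidx (t : D.T) : ℕ :=
  if ht : t = root I D then 0
  else (childEquiv I D (opar I D t) ⟨t, mem_chl_self I D ht⟩).val

theorem cidx_lt {t : D.T} (ht : t ≠ root I D) :
    cidx I D t < ncd I D (opar I D t) := by
  rw [cidx, dif_neg ht]
  exact (childEquiv I D (opar I D t) ⟨t, mem_chl_self I D ht⟩).isLt

theorem cidx_val {t p : D.T} (ht : t ≠ root I D) (hp : opar I D t = p)
    (hmem : t ∈ chl I D p) :
    cidx I D t = (childEquiv I D p ⟨t, hmem⟩).val := by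
  subst hp
  rw [cidx, dif_neg ht]

theorem cidx_inj {p t s : D.T} (ht : t ≠ root I D) (hs : s ≠ root I D)
    (hpt : opar I D t = p) (hps : opar I D s = p)
    (h : cidx I D t = cidx I D s) : t = s := by
  have hmt : t ∈ chl I D p := hpt ▸ mem_chl_self I D ht
  have hms : s ∈ chl I D p := hps ▸ mem_chl_self I D hs
  rw [cidx_val I D ht hpt hmt, cidx_val I D hs hps hms] at h
  have := (childEquiv I D p).injective (Fin.ext h)
  exact congrArg Subtype.val this

noncomputable def npar : NT I D → NT I D := fun x =>
  if hi : (x.2 : ℕ) = 0 then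
    (if ht : x.1 = root I D then x
     else ⟨opar I D x.1, ⟨cidx I D x.1 + 1, by
        have := cidx_lt I D ht; omega⟩⟩)
  else ⟨x.1, ⟨(x.2 : ℕ) - 1, by have := x.2.isLt; omega⟩⟩

noncomputable def nrt : NT I D := ⟨root I D, ⟨0, Nat.succ_pos _⟩⟩

noncomputable def baseAux : ℕ → D.T → ℕ
  | 0, _ => 0
  | (n+1), t => baseAux n (opar I D t) + cidx I D t + 2

noncomputable def ndep : NT I D → ℕ := fun x => baseAux I D (dpt I D x.1) x.1 + (x.2 : ℕ)

theorem npar_root : npar I D (nrt I D) = nrt I D := by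
  rw [npar, nrt]
  simp
  rfl

theorem ndep_root : ndep I D (nrt I D) = 0 := by
  rw [ndep, nrt]
  simp only
  rw [dpt_root, baseAux]

theorem eq_nrt_iff {t : D.T} {i : Fin (ncd I D t + 1)} :
    (⟨t, i⟩ : NT I D) = nrt I D ↔ t = root I D ∧ (i : ℕ) = 0 := by
  constructor
  · intro h
    rw [nrt] at h
    obtain ⟨h1, h2⟩ := Sigma.mk.inj_iff.mp h
    subst h1
    rw [eq_of_heq h2]
    exact ⟨rfl, rfl⟩
  · rintro ⟨h1, h2⟩
    subst h1
    rw [nrt]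
    congr 1
    exact Fin.ext h2

theorem npar_copy {t : D.T} {i : Fin (ncd I D t + 1)} (hi : (i : ℕ) ≠ 0) :
    npar I D ⟨t, i⟩ = ⟨t, ⟨(i : ℕ) - 1, by have := i.isLt; omega⟩⟩ := by
  unfold npar
  simp only
  exact dif_neg hi

theorem npar_zero {t : D.T} (ht : t ≠ root I D) (i : Fin (ncd I D t + 1))
    (hi : (i : ℕ) = 0) :
    npar I D ⟨t, i⟩ = ⟨opar I D t, ⟨cidx I D t + 1, by have := cidx_lt I D ht; omega⟩⟩ := by
  unfold npar
  simp only
  exact (dif_pos hi).trans (dif_neg ht)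

theorem ndep_par : ∀ x : NT I D, x ≠ nrt I D → ndep I D (npar I D x) + 1 = ndep I D x := by
  rintro ⟨t, i⟩ hx
  by_cases hi : (i : ℕ) = 0
  · have ht : t ≠ root I D := by
      intro h
      exact hx ((eq_nrt_iff I D).mpr ⟨h, hi⟩)
    rw [npar_zero I D ht i hi]; unfold ndep
    simp only
    have h1 : dpt I D t = dpt I D (opar I D t) + 1 := ((opar_spec I D ht).2).symm
    rw [hi, h1, baseAux]
    omega
  · rw [npar_copy I D hi]; unfold ndep
    simp only
    omega

noncomputable def ngraph : SimpleGraph (NT I D) := pgraph (npar I D)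

theorem ngraph_isTree : (ngraph I D).IsTree :=
  pg_isTree (npar I D) (ndep I D) (nrt I D) (npar_root I D) (ndep_root I D)
    (ndep_par I D)

theorem nzero : ∀ t : D.T, ((⟨0, Nat.succ_pos _⟩ : Fin (ncd I D t + 1)) : ℕ) = 0 :=
  fun _ => rfl

theorem lift_stepA (U : Set D.T) {t : D.T} (hU : t ∈ U) :
    ∀ i : Fin (ncd I D t + 1), Reaches (npar I D) (fun x => x.1 ∈ U) ⟨t, i⟩
      ⟨t, ⟨0, Nat.succ_pos _⟩⟩ := by
  rintro ⟨iv, hlt⟩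
  induction iv with
  | zero => exact Reaches.refl hU
  | succ n ihn =>
    refine Reaches.head hU ?_
    rw [npar_copy I D (by simp : ((⟨n+1, hlt⟩ : Fin _) : ℕ) ≠ 0)]
    exact ihn (by omega)

theorem lift_reach (U : Set D.T) {t r : D.T}
    (h : Reaches (opar I D) (· ∈ U) t r) (i : Fin (ncd I D t + 1)) :
    Reaches (npar I D) (fun x => x.1 ∈ U) ⟨t, i⟩ ⟨r, ⟨0, Nat.succ_pos _⟩⟩ := by
  obtain ⟨n, h1, h2⟩ := h
  induction n generalizing t i with
  | zero =>
    simp only [Function.iterate_zero, id] at h1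
    subst h1
    exact lift_stepA I D U (h2 0 le_rfl) i
  | succ n ih =>
    have hU : t ∈ U := by simpa using h2 0 (Nat.zero_le _)
    by_cases ht : t = root I D
    · have hfix : opar I D t = t := by rw [ht, opar_root]
      have : (opar I D)^[n+1] t = t := Function.iterate_fixed hfix (n+1)
      rw [this] at h1
      subst h1
      exact lift_stepA I D U hU i
    · refine (lift_stepA I D U hU i).trans (Reaches.head hU ?_)
      rw [npar_zero I D ht _ rfl]
      refine ih (t := opar I D t) (i := ⟨cidx I D t + 1, by have := cidx_lt I D ht; omega⟩) ?_ ?_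
      · rw [← Function.iterate_succ_apply]
        exact h1
      · intro j hj
        rw [← Function.iterate_succ_apply]
        exact h2 (j+1) (by omega)

theorem npar_fix {t : D.T} (ht : t = root I D) (i : Fin (ncd I D t + 1))
    (hi : (i : ℕ) = 0) : npar I D ⟨t, i⟩ = ⟨t, i⟩ := by
  unfold npar
  simp only
  exact (dif_pos hi).trans (dif_pos ht)

instance ntFinite : Finite (NT I D) := by
  unfold NT
  infer_instance

end Construction

theorem main (k : ℕ) (I : IncGraph) (hI : I ∈ IEHW k) :
    ∃ (D : EHD I) (ω : D.T), (D.Cover ω).ncard ≤ k ∧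
      (∀ t : D.T, {c | D.tr.Adj t c ∧ D.tr.dist ω c = D.tr.dist ω t + 1}.ncard ≤ 2) ∧
      (∀ tp tc : D.T, D.tr.Adj tp tc → D.tr.dist ω tc = D.tr.dist ω tp + 1 →
        (D.Cover tc).ncard ≤ (D.Cover tp).ncard) := by
  classical
  obtain ⟨D, hw⟩ := hI
  refine ⟨{ T := NT I D
          , finT := ntFinite I D
          , tr := ngraph I D
          , isTree := ngraph_isTree I D
          , Bag := fun x => ⋃ e ∈ (cov' I D x.1 : Set I.B), I.nbhd e
          , Cover := fun x => (cov' I D x.1 : Set I.B)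
          , complete := ?_
          , connR := ?_
          , covering := fun _ => subset_rfl
          , precise := fun _ => rfl
          , connB := ?_ }, nrt I D, ?_, ?_, ?_⟩
  · -- complete
    intro e
    obtain ⟨t, h1, h2⟩ := D.complete e
    have he : e ∈ cov' I D t := cov'_subset I D t ((covF_mem I D).mpr h2)
    refine ⟨⟨t, ⟨0, Nat.succ_pos _⟩⟩, ?_, ?_⟩
    · intro v hv
      exact Set.mem_biUnion (Finset.mem_coe.mpr he) hv
    · exact Finset.mem_coe.mpr he
  · -- connR
    intro v
    set OV : Set D.T := {t | ∃ e ∈ cov' I D t, v ∈ I.nbhd e} with hOV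
    have hmemiff : ∀ x : NT I D,
        (v ∈ ⋃ e ∈ (cov' I D x.1 : Set I.B), I.nbhd e) ↔ x.1 ∈ OV := by
      intro x
      simp [hOV]
    have hold : (D.tr.induce {t | v ∈ D.Bag t}).Connected := D.connR v
    have hsub : {t | v ∈ D.Bag t} ⊆ OV := by
      intro t ht
      rw [Set.mem_setOf_eq, ← D.precise t] at ht
      simp only [Set.mem_iUnion] at ht
      obtain ⟨e, he, hv⟩ := ht
      exact ⟨e, cov'_subset I D t ((covF_mem I D).mpr he), hv⟩
    have hcl : ∀ u ∈ OV, u ∉ {t | v ∈ D.Bag t} →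
        u ≠ root I D ∧ opar I D u ∈ OV := by
      intro u hu hnot
      obtain ⟨e, he, hv⟩ := hu
      have henotF : e ∉ covF I D u := by
        intro hmem
        apply hnot
        rw [Set.mem_setOf_eq, ← D.precise u]
        exact Set.mem_biUnion ((covF_mem I D).mp hmem) hv
      have hne : u ≠ root I D := by
        intro h
        subst h
        rw [cov'_root] at he
        exact henotF he
      refine ⟨hne, ?_⟩
      rcases Finset.mem_union.mp (cov'_sub I D hne he) with h | h
      · exact absurd h henotF
      · exact ⟨e, h, hv⟩
    obtain ⟨r, hr, hchain⟩ := tree_chain_ext D.tr D.isTree (root I D)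
        {t | v ∈ D.Bag t} OV hsub hold hcl
    refine pg_induce_connected (npar I D) _ ⟨r, ⟨0, Nat.succ_pos _⟩⟩
      ((hmemiff _).mpr hr) ?_
    rintro ⟨t, i⟩ hx
    exact (lift_reach I D OV (hchain t ((hmemiff _).mp hx)) i).mono
      (fun a ha => (hmemiff _).mpr ha)
  · -- connB
    intro e
    set SE : Set D.T := {t | e ∈ cov' I D t} with hSE
    have hmemiff : ∀ x : NT I D,
        (e ∈ (cov' I D x.1 : Set I.B)) ↔ x.1 ∈ SE := by
      intro x
      simp [hSE]
    have hold : (D.tr.induce {t | e ∈ D.Cover t}).Connected := D.connB e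
    have hsub : {t | e ∈ D.Cover t} ⊆ SE := by
      intro t ht
      exact cov'_subset I D t ((covF_mem I D).mpr ht)
    have hcl : ∀ u ∈ SE, u ∉ {t | e ∈ D.Cover t} →
        u ≠ root I D ∧ opar I D u ∈ SE := by
      intro u hu hnot
      have henotF : e ∉ covF I D u := fun hmem => hnot ((covF_mem I D).mp hmem)
      have hne : u ≠ root I D := by
        intro h
        subst h
        rw [hSE, Set.mem_setOf_eq, cov'_root] at hu
        exact henotF hu
      refine ⟨hne, ?_⟩
      rcases Finset.mem_union.mp (cov'_sub I D hne hu) with h | h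
      · exact absurd h henotF
      · exact h
    obtain ⟨r, hr, hchain⟩ := tree_chain_ext D.tr D.isTree (root I D)
        {t | e ∈ D.Cover t} SE hsub hold hcl
    refine pg_induce_connected (npar I D) _ ⟨r, ⟨0, Nat.succ_pos _⟩⟩
      ((hmemiff _).mpr hr) ?_
    rintro ⟨t, i⟩ hx
    exact (lift_reach I D SE (hchain t ((hmemiff _).mp hx)) i).mono
      (fun a ha => (hmemiff _).mpr ha)
  · -- root cover small
    show ((cov' I D (root I D) : Finset I.B) : Set I.B).ncard ≤ k
    rw [Set.ncard_coe_finset, cov'_root, covF_card]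
    exact hw (root I D)
  · -- binary
    rintro ⟨t, i⟩
    show {c | (ngraph I D).Adj ⟨t, i⟩ c ∧
        (ngraph I D).dist (nrt I D) c = (ngraph I D).dist (nrt I D) ⟨t, i⟩ + 1}.ncard ≤ 2
    have hch : {c | (ngraph I D).Adj ⟨t, i⟩ c ∧
        (ngraph I D).dist (nrt I D) c = (ngraph I D).dist (nrt I D) ⟨t, i⟩ + 1}
        = {c : NT I D | npar I D c = ⟨t, i⟩ ∧ c ≠ ⟨t, i⟩} :=
      pg_children (npar I D) (ndep I D) (nrt I D) (npar_root I D) (ndep_root I D)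
        (ndep_par I D) ⟨t, i⟩
    rw [hch]
    have hinj : Set.InjOn (fun c : NT I D => decide ((c.2 : ℕ) = 0))
        {c : NT I D | npar I D c = ⟨t, i⟩ ∧ c ≠ ⟨t, i⟩} := by
      rintro ⟨s, j⟩ ⟨h1, h2⟩ ⟨s', j'⟩ ⟨h1', h2'⟩ heq
      simp only [decide_eq_decide] at heq
      by_cases hj : (j : ℕ) = 0
      · have hj' : (j' : ℕ) = 0 := heq.mp hj
        have hs : s ≠ root I D := by
          intro h
          rw [npar_fix I D h j hj] at h1
          exact h2 h1
        have hs' : s' ≠ root I D := by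
          intro h
          rw [npar_fix I D h j' hj'] at h1'
          exact h2' h1'
        rw [npar_zero I D hs j hj] at h1
        rw [npar_zero I D hs' j' hj'] at h1'
        obtain ⟨ha, hb⟩ := Sigma.mk.inj_iff.mp h1
        obtain ⟨ha', hb'⟩ := Sigma.mk.inj_iff.mp h1'
        subst ha
        have hcx : cidx I D s + 1 = (i : ℕ) := congrArg Fin.val (eq_of_heq hb)
        have hcx' : cidx I D s' + 1 = (i : ℕ) :=
          (Fin.heq_ext_iff (by rw [ha'])).mp hb'
        have hss : s = s' := cidx_inj I D hs hs' rfl ha' (by omega)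
        subst hss
        have : j = j' := Fin.ext (by omega)
        rw [this]
      · have hj' : (j' : ℕ) ≠ 0 := fun h => hj (heq.mpr h)
        rw [npar_copy I D hj] at h1
        rw [npar_copy I D hj'] at h1'
        obtain ⟨ha, hb⟩ := Sigma.mk.inj_iff.mp h1
        obtain ⟨ha', hb'⟩ := Sigma.mk.inj_iff.mp h1'
        subst ha
        have hcx : (j : ℕ) - 1 = (i : ℕ) := congrArg Fin.val (eq_of_heq hb)
        have hss : s' = s := ha'
        subst hss
        have hcx' : (j' : ℕ) - 1 = (i : ℕ) := congrArg Fin.val (eq_of_heq hb')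
        have : j = j' := Fin.ext (by omega)
        rw [this]
    calc {c : NT I D | npar I D c = ⟨t, i⟩ ∧ c ≠ ⟨t, i⟩}.ncard
        ≤ (Set.univ : Set Bool).ncard :=
          Set.ncard_le_ncard_of_injOn _ (fun a _ => Set.mem_univ _) hinj
            Set.finite_univ
      _ ≤ 2 := by
          rw [Set.ncard_univ, Nat.card_eq_fintype_card, Fintype.card_bool]
  · -- monotone
    intro tp tc _ _
    show ((cov' I D tc.1 : Finset I.B) : Set I.B).ncard
        ≤ ((cov' I D tp.1 : Finset I.B) : Set I.B).ncard
    rw [Set.ncard_coe_finset, Set.ncard_coe_finset, cov'_card, cov'_card]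



end BMEHD


/-- Every `I ∈ IEHW_k` has an entangled hypertree decomposition
`D` with a root `ω` with `|Cover(ω)| ≤ k` such that the tree rooted at `ω` is binary
(every node has at most two children) and monotone (covers do not grow from parent
to child). -/
theorem exists_binary_monotone_ehd (k : ℕ) (I : IncGraph) (hI : I ∈ IEHW k) :
    ∃ (D : EHD I) (ω : D.T), (D.Cover ω).ncard ≤ k ∧
      (∀ t : D.T, {c | D.tr.Adj t c ∧ D.tr.dist ω c = D.tr.dist ω t + 1}.ncard ≤ 2) ∧
      (∀ tp tc : D.T, D.tr.Adj tp tc → D.tr.dist ω tc = D.tr.dist ω tp + 1 →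
        (D.Cover tc).ncard ≤ (D.Cover tp).ncard) := by
  exact BMEHD.main k I hI
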